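/- Let H0, H1, D, D*, V, Δ, Δ* and the universal colligation U0 be as in the universal-colligation setup, let U1 = [[A1,B1],[C1,D1]] : H1 ⊕ Δ → H1 ⊕ Δ* be a unitary colligation, and let W = F_ℓ(U0,U1) be the resulting unitary extension of V on H0 ⊕ H1. Then W is a minimal unitary extension of V — that is, the smallest closed subspace of H0 ⊕ H1 containing H0 ⊕ {0} and invariant for both W and W* is all of H0 ⊕ H1 — if and only if U1 is simple, that is, the smallest closed subspace of H1 containing range B1 and range C1* and invariant for both A1 and A1* is all of H1. -/

import Mathlib

open ContinuousLinearMap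

open scoped InnerProductSpace

set_option maxHeartbeats 1000000

private lemma auxQF {E : Type*} [NormedAddCommGroup E] [InnerProductSpace ℂ E] [CompleteSpace E]
    (T : E →L[ℂ] E) (h : ∀ x, ⟪T x, x⟫_ℂ = 0) (x : E) : T x = 0 := by
  have := inner_map_self_eq_zero (T : E →ₗ[ℂ] E) |>.mp h
  exact LinearMap.congr_fun this x

/-- **Minimality of the unitary extension `W = F_ℓ(U0,U1)` ↔ simplicity of `U1`.**
With the universal-colligation setup, and `U1 = [[A1,B1],[C1,D1]]` a unitary colligation,
the unitary extension `W = F_ℓ(U0,U1)` of `V` on `H0 ⊕ H1` is minimal (the smallest closed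
subspace containing `H0 ⊕ {0}` and invariant for both `W` and `W*` is everything) if and
only if `U1` is simple (the smallest closed subspace of `H1` containing `range B1` and
`range C1*` and invariant for both `A1` and `A1*` is all of `H1`). -/
theorem stmt_12 {H0 H1 : Type*}
    [NormedAddCommGroup H0] [InnerProductSpace ℂ H0] [CompleteSpace H0]
    [NormedAddCommGroup H1] [InnerProductSpace ℂ H1] [CompleteSpace H1]
    (D Dst : Submodule ℂ H0) [CompleteSpace D] [CompleteSpace Dst]
    (V : D ≃ₗᵢ[ℂ] Dst)
    (A1 : H1 →L[ℂ] H1) (B1 : Dᗮ →L[ℂ] H1) (C1 : H1 →L[ℂ] Dstᗮ) (D1 : Dᗮ →L[ℂ] Dstᗮ)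
    -- `U1 = [[A1,B1],[C1,D1]]` is a unitary colligation
    (hU1iso : ∀ (h1 : H1) (δ : Dᗮ),
        ‖A1 h1 + B1 δ‖ ^ 2 + ‖C1 h1 + D1 δ‖ ^ 2 = ‖h1‖ ^ 2 + ‖δ‖ ^ 2)
    (hU1surj : ∀ (y : H1) (ε : Dstᗮ), ∃ (h1 : H1) (δ : Dᗮ),
        A1 h1 + B1 δ = y ∧ C1 h1 + D1 δ = ε)
    -- `W` is the feedback connection `F_ℓ(U0, U1)`, the corresponding unitary extension of `V`
    (W : (H0 × H1) →L[ℂ] (H0 × H1))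
    (hW : ∀ (h : H0) (h1 : H1),
      W (h, h1) =
        ((V (D.orthogonalProjection h) : H0)
            + ((D1 (Dᗮ.orthogonalProjection h) : Dstᗮ) : H0)
            + ((C1 h1 : Dstᗮ) : H0),
          B1 (Dᗮ.orthogonalProjection h) + A1 h1)) :
    -- `W` is a minimal unitary extension of `V`
    (∀ S : Submodule ℂ (H0 × H1), IsClosed (S : Set (H0 × H1)) →
        (∀ h : H0, ((h, (0 : H1)) : H0 × H1) ∈ S) →
        (∀ p ∈ S, W p ∈ S) →
        (∀ p : H0 × H1, W p ∈ S → p ∈ S) →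
        S = ⊤) ↔
    -- `U1` is a simple unitary colligation
    (∀ T : Submodule ℂ H1, IsClosed (T : Set H1) →
        (∀ δ : Dᗮ, B1 δ ∈ T) →
        (∀ ε : Dstᗮ, adjoint C1 ε ∈ T) →
        (∀ x ∈ T, A1 x ∈ T) →
        (∀ x ∈ T, adjoint A1 x ∈ T) →
        T = ⊤) := by
  -- quadratic identities
  have q1 : ∀ x : H1, ‖A1 x‖ ^ 2 + ‖C1 x‖ ^ 2 = ‖x‖ ^ 2 := by
    intro x; simpa using hU1iso x 0
  have q2 : ∀ δ : Dᗮ, ‖B1 δ‖ ^ 2 + ‖D1 δ‖ ^ 2 = ‖δ‖ ^ 2 := by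
    intro δ; simpa using hU1iso 0 δ
  -- isometry relations
  have I1 : ∀ x : H1, adjoint A1 (A1 x) + adjoint C1 (C1 x) = x := by
    have hz : ∀ x : H1, ⟪((adjoint A1).comp A1 + (adjoint C1).comp C1
        - ContinuousLinearMap.id ℂ H1) x, x⟫_ℂ = 0 := by
      intro x
      simp only [sub_apply, add_apply, comp_apply, ContinuousLinearMap.id_apply,
        inner_sub_left, inner_add_left, adjoint_inner_left]
      rw [inner_self_eq_norm_sq_to_K, inner_self_eq_norm_sq_to_K,
        inner_self_eq_norm_sq_to_K]
      norm_cast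
      rw [show ‖A1 x‖ ^ 2 + ‖C1 x‖ ^ 2 - ‖x‖ ^ 2 = (0:ℝ) by linarith [q1 x]]
      exact Complex.ofReal_zero
    intro x
    have := auxQF _ hz x
    simpa [sub_eq_zero] using this
  have I2 : ∀ δ : Dᗮ, adjoint B1 (B1 δ) + adjoint D1 (D1 δ) = δ := by
    have hz : ∀ δ : Dᗮ, ⟪((adjoint B1).comp B1 + (adjoint D1).comp D1
        - ContinuousLinearMap.id ℂ Dᗮ) δ, δ⟫_ℂ = 0 := by
      intro δ
      simp only [sub_apply, add_apply, comp_apply, ContinuousLinearMap.id_apply,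
        inner_sub_left, inner_add_left, adjoint_inner_left]
      rw [inner_self_eq_norm_sq_to_K, inner_self_eq_norm_sq_to_K,
        inner_self_eq_norm_sq_to_K]
      norm_cast
      rw [show ‖B1 δ‖ ^ 2 + ‖D1 δ‖ ^ 2 - ‖δ‖ ^ 2 = (0:ℝ) by linarith [q2 δ]]
      exact Complex.ofReal_zero
    intro δ
    have := auxQF _ hz δ
    simpa [sub_eq_zero] using this
  -- cross relation
  have re0 : ∀ (x : H1) (δ : Dᗮ),
      RCLike.re (⟪A1 x, B1 δ⟫_ℂ + ⟪C1 x, D1 δ⟫_ℂ) = 0 := by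
    intro x δ
    have h := hU1iso x δ
    rw [@norm_add_sq ℂ, @norm_add_sq ℂ] at h
    have h1 := q1 x
    have h2 := q2 δ
    rw [map_add]
    nlinarith [h, h1, h2]
  have I3 : ∀ (x : H1) (δ : Dᗮ), ⟪A1 x, B1 δ⟫_ℂ + ⟪C1 x, D1 δ⟫_ℂ = 0 := by
    intro x δ
    have hre := re0 x δ
    have him := re0 ((Complex.I : ℂ) • x) δ
    simp only [map_smul, inner_smul_left, Complex.conj_I, map_add,
      RCLike.re_to_complex] at him hre
    simp only [Complex.mul_re, Complex.neg_re, Complex.neg_im, Complex.I_re,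
      Complex.I_im] at him
    apply Complex.ext
    · simpa [Complex.add_re] using hre
    · simp only [Complex.zero_im, Complex.add_im]
      linarith [him]
  have I3a : ∀ δ : Dᗮ, adjoint A1 (B1 δ) + adjoint C1 (D1 δ) = 0 := by
    intro δ
    refine ext_inner_left ℂ fun v => ?_
    rw [inner_add_right, adjoint_inner_right, adjoint_inner_right, inner_zero_right]
    exact I3 v δ
  have I3b : ∀ x : H1, adjoint B1 (A1 x) + adjoint D1 (C1 x) = 0 := by
    intro x
    refine ext_inner_left ℂ fun v => ?_
    rw [inner_add_right, adjoint_inner_right, adjoint_inner_right, inner_zero_right]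
    have := I3 x v
    calc ⟪B1 v, A1 x⟫_ℂ + ⟪D1 v, C1 x⟫_ℂ
        = starRingEnd ℂ (⟪A1 x, B1 v⟫_ℂ + ⟪C1 x, D1 v⟫_ℂ) := by
          rw [map_add, inner_conj_symm, inner_conj_symm]
      _ = 0 := by rw [this, map_zero]
  -- coisometry relations
  have Jgen : ∀ (y : H1) (ε : Dstᗮ),
      A1 (adjoint A1 y + adjoint C1 ε) + B1 (adjoint B1 y + adjoint D1 ε) = y ∧
      C1 (adjoint A1 y + adjoint C1 ε) + D1 (adjoint B1 y + adjoint D1 ε) = ε := by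
    intro y ε
    obtain ⟨h, δ, e1, e2⟩ := hU1surj y ε
    have hh : adjoint A1 y + adjoint C1 ε = h := by
      rw [← e1, ← e2]
      rw [map_add, map_add]
      have := I1 h
      have := I3a δ
      calc adjoint A1 (A1 h) + adjoint A1 (B1 δ) + (adjoint C1 (C1 h) + adjoint C1 (D1 δ))
          = (adjoint A1 (A1 h) + adjoint C1 (C1 h)) + (adjoint A1 (B1 δ) + adjoint C1 (D1 δ)) := by abel
        _ = h := by rw [I1 h, I3a δ, add_zero]
    have hd : adjoint B1 y + adjoint D1 ε = δ := by
      rw [← e1, ← e2]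
      rw [map_add, map_add]
      calc adjoint B1 (A1 h) + adjoint B1 (B1 δ) + (adjoint D1 (C1 h) + adjoint D1 (D1 δ))
          = (adjoint B1 (B1 δ) + adjoint D1 (D1 δ)) + (adjoint B1 (A1 h) + adjoint D1 (C1 h)) := by abel
        _ = δ := by rw [I2 δ, I3b h, add_zero]
    rw [hh, hd]
    exact ⟨e1, e2⟩
  have J1a : ∀ y : H1, A1 (adjoint A1 y) + B1 (adjoint B1 y) = y := by
    intro y; simpa using (Jgen y 0).1
  have J1b : ∀ y : H1, C1 (adjoint A1 y) + D1 (adjoint B1 y) = 0 := by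
    intro y; simpa using (Jgen y 0).2
  have J2a : ∀ ε : Dstᗮ, A1 (adjoint C1 ε) + B1 (adjoint D1 ε) = 0 := by
    intro ε; simpa using (Jgen 0 ε).1
  have J2b : ∀ ε : Dstᗮ, C1 (adjoint C1 ε) + D1 (adjoint D1 ε) = ε := by
    intro ε; simpa using (Jgen 0 ε).2
  -- projection facts
  have pD0 : ∀ δ : Dᗮ, D.orthogonalProjection (δ : H0) = 0 := fun δ =>
    Submodule.orthogonalProjectionOnto_apply_of_mem_orthogonal δ.2
  have pDp : ∀ δ : Dᗮ, Dᗮ.orthogonalProjection (δ : H0) = δ := fun δ =>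
    Submodule.orthogonalProjectionOnto_mem_subspace_eq_self δ
  constructor
  · -- minimality → simplicity
    intro hmin T hTcl hTB hTC hTA hTAs
    set S : Submodule ℂ (H0 × H1) := (⊤ : Submodule ℂ H0).prod T with hSdef
    have hmemS : ∀ (a : H0) (x : H1), (a, x) ∈ S ↔ x ∈ T := by
      intro a x
      simp [hSdef, Submodule.mem_prod]
    have hSc : IsClosed (S : Set (H0 × H1)) := by
      have : (S : Set (H0 × H1)) = (Set.univ : Set H0) ×ˢ (T : Set H1) := by
        ext p; simp [hSdef, Submodule.mem_prod, Set.mem_prod]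
      rw [this]
      exact isClosed_univ.prod hTcl
    have hS0 : ∀ h : H0, ((h, (0 : H1)) : H0 × H1) ∈ S := fun h =>
      (hmemS h 0).mpr T.zero_mem
    have hSW : ∀ p ∈ S, W p ∈ S := by
      rintro ⟨h, x⟩ hp
      rw [hW]
      refine (hmemS _ _).mpr ?_
      exact T.add_mem (hTB _) (hTA x ((hmemS h x).mp hp))
    have hSWb : ∀ p : H0 × H1, W p ∈ S → p ∈ S := by
      rintro ⟨h, x⟩ hp
      rw [hW] at hp
      have hk1 : B1 (Dᗮ.orthogonalProjection h) + A1 x ∈ T := (hmemS _ _).mp hp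
      have hx : x ∈ T := by
        have key : adjoint A1 (B1 (Dᗮ.orthogonalProjection h) + A1 x)
            + adjoint C1 (D1 (Dᗮ.orthogonalProjection h) + C1 x) = x := by
          rw [map_add, map_add]
          calc adjoint A1 (B1 (Dᗮ.orthogonalProjection h)) + adjoint A1 (A1 x)
                + (adjoint C1 (D1 (Dᗮ.orthogonalProjection h)) + adjoint C1 (C1 x))
              = (adjoint A1 (B1 (Dᗮ.orthogonalProjection h))
                  + adjoint C1 (D1 (Dᗮ.orthogonalProjection h)))
                + (adjoint A1 (A1 x) + adjoint C1 (C1 x)) := by abel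
            _ = x := by rw [I3a, I1, zero_add]
        rw [← key]
        exact T.add_mem (hTAs _ hk1) (hTC _)
      exact (hmemS h x).mpr hx
    have hStop := hmin S hSc hS0 hSW hSWb
    rw [eq_top_iff]
    intro x _
    have : ((0 : H0), x) ∈ S := by rw [hStop]; trivial
    exact (hmemS 0 x).mp this
  · -- simplicity → minimality
    intro hsimple S hScl hS0 hSW hSWb
    set T : Submodule ℂ H1 := S.comap (LinearMap.inr ℂ H0 H1) with hTdef
    have hmemT : ∀ x : H1, x ∈ T ↔ ((0 : H0), x) ∈ S := by
      intro x; simp [hTdef, Submodule.mem_comap, LinearMap.inr_apply]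
    have memT : ∀ (a : H0) (x : H1), (a, x) ∈ S → x ∈ T := by
      intro a x hx
      have h2 := S.sub_mem hx (hS0 a)
      have : ((a, x) : H0 × H1) - (a, 0) = ((0 : H0), x) := by
        simp [Prod.ext_iff]
      rw [this] at h2
      exact (hmemT x).mpr h2
    have hTcl : IsClosed (T : Set H1) := by
      have : (T : Set H1) = (fun x : H1 => ((0 : H0), x)) ⁻¹' (S : Set (H0 × H1)) := by
        ext x; simp [hmemT x]
      rw [this]
      exact hScl.preimage (Continuous.prodMk continuous_const continuous_id)
    have hTB : ∀ δ : Dᗮ, B1 δ ∈ T := by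
      intro δ
      have h1 := hSW ((δ : H0), 0) (hS0 δ)
      rw [hW] at h1
      rw [pD0, pDp] at h1
      simp only [map_zero, Submodule.coe_zero, zero_add, add_zero] at h1
      exact memT _ _ h1
    have hTC : ∀ ε : Dstᗮ, adjoint C1 ε ∈ T := by
      intro ε
      have hWp : W (((adjoint D1 ε : Dᗮ) : H0), adjoint C1 ε) = ((ε : H0), 0) := by
        rw [hW, pD0, pDp]
        refine Prod.ext ?_ ?_
        · show (V 0 : H0) + _ + _ = (ε : H0)
          rw [map_zero, Submodule.coe_zero, zero_add, ← Submodule.coe_add]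
          congr 1
          rw [add_comm]
          exact J2b ε
        · show B1 _ + A1 _ = 0
          rw [add_comm]
          exact J2a ε
      have h1 : W (((adjoint D1 ε : Dᗮ) : H0), adjoint C1 ε) ∈ S := by
        rw [hWp]; exact hS0 _
      exact memT _ _ (hSWb _ h1)
    have hTA : ∀ x ∈ T, A1 x ∈ T := by
      intro x hx
      have h1 := hSW ((0 : H0), x) ((hmemT x).mp hx)
      rw [hW] at h1
      simp only [map_zero, Submodule.coe_zero, zero_add] at h1
      exact memT _ _ h1
    have hTAs : ∀ x ∈ T, adjoint A1 x ∈ T := by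
      intro x hx
      have hWp : W (((adjoint B1 x : Dᗮ) : H0), adjoint A1 x) = ((0 : H0), x) := by
        rw [hW, pD0, pDp]
        refine Prod.ext ?_ ?_
        · show (V 0 : H0) + _ + _ = (0 : H0)
          rw [map_zero, Submodule.coe_zero, zero_add, ← Submodule.coe_add]
          rw [show D1 (adjoint B1 x) + C1 (adjoint A1 x) = 0 by
            rw [add_comm]; exact J1b x]
          exact ZeroMemClass.coe_zero _
        · show B1 _ + A1 _ = x
          rw [add_comm]
          exact J1a x
      have h1 : W (((adjoint B1 x : Dᗮ) : H0), adjoint A1 x) ∈ S := by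
        rw [hWp]; exact (hmemT x).mp hx
      exact memT _ _ (hSWb _ h1)
    have hTtop := hsimple T hTcl hTB hTC hTA hTAs
    rw [eq_top_iff]
    rintro ⟨a, x⟩ _
    have hx : x ∈ T := by rw [hTtop]; trivial
    have h1 : ((0 : H0), x) ∈ S := (hmemT x).mp hx
    have h2 : ((a, 0) : H0 × H1) ∈ S := hS0 a
    have : ((a, x) : H0 × H1) = (a, 0) + (0, x) := by simp [Prod.ext_iff]
    rw [this]
    exact S.add_mem h2 h1
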